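/- For every integer n ≥ 2 there exist uncountably many formal power series f(z) ∈ ℂ[[z]] of compositional order n whose radius of convergence is zero, i.e., f(z) does not converge for any nonzero z ∈ ℂ. -/

import Mathlib

open PowerSeries

/-- Composition (substitution) of formal power series: coefficient formula,
valid for `g` with zero constant term. -/
noncomputable def PS.comp {F : Type*} [CommRing F] (f g : PowerSeries F) : PowerSeries F :=
  PowerSeries.mk fun k =>
    ∑ n ∈ Finset.range (k + 1), (PowerSeries.coeff n f) * (PowerSeries.coeff k (g ^ n))

/-- The group `G` of series with zero constant term and nonzero linear coefficient. -/
def PS.G (F : Type*) [CommRing F] : Set (PowerSeries F) :=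
  {f | PowerSeries.constantCoeff f = 0 ∧ PowerSeries.coeff 1 f ≠ 0}

/-- `n`-fold compositional iterate of `f`. -/
noncomputable def PS.iter {F : Type*} [CommRing F] (f : PowerSeries F) : ℕ → PowerSeries F
  | 0 => PowerSeries.X
  | n + 1 => PS.comp f (PS.iter f n)

/-- `f` has compositional order exactly `n`. -/
def PS.HasOrder {F : Type*} [CommRing F] (f : PowerSeries F) (n : ℕ) : Prop :=
  PS.iter f n = PowerSeries.X ∧ ∀ m, 0 < m → m < n → PS.iter f m ≠ PowerSeries.X

open Finset

namespace PSAux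

variable (f g h p q : PowerSeries ℂ)

lemma coeff_comp (k : ℕ) :
    coeff k (PS.comp f g) = ∑ m ∈ range (k + 1), coeff m f * coeff k (g ^ m) := by
  simp [PS.comp]

lemma coeff_zero (hg : constantCoeff g = 0) : coeff 0 g = 0 := by
  rw [PowerSeries.coeff_zero_eq_constantCoeff, hg]

lemma coeff_pow_eq_zero (hg : constantCoeff g = 0) :
    ∀ m k, k < m → coeff k (g ^ m) = 0 := by
  intro m
  induction m with
  | zero => omega
  | succ m ih =>
    intro k hk
    rw [pow_succ, mul_comm, coeff_mul]
    apply Finset.sum_eq_zero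
    rintro ⟨i, j⟩ hij
    rw [Finset.HasAntidiagonal.mem_antidiagonal] at hij
    rcases Nat.eq_zero_or_pos i with hi | hi
    · subst hi
      rw [coeff_zero g hg, zero_mul]
    · rw [ih j (by omega), mul_zero]

lemma coeff_pow_self (hg : constantCoeff g = 0) (k : ℕ) :
    coeff k (g ^ k) = (coeff 1 g) ^ k := by
  induction k with
  | zero => simp
  | succ k ih =>
    rw [pow_succ, mul_comm, coeff_mul]
    rw [Finset.sum_eq_single (1, k)]
    · rw [ih, pow_succ, mul_comm ((coeff 1 g)^k)]
    · rintro ⟨i, j⟩ hij hne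
      rw [Finset.HasAntidiagonal.mem_antidiagonal] at hij
      rcases Nat.lt_or_ge j k with hj | hj
      · rw [coeff_pow_eq_zero g hg k j hj, mul_zero]
      · have : i = 0 := by
          rcases Nat.eq_or_lt_of_le hj with h | h
          · exfalso; exact hne (by simp only [Prod.mk.injEq]; omega)
          · omega
        subst this
        rw [coeff_zero g hg, zero_mul]
    · intro hmem
      exfalso; exact hmem (by rw [Finset.HasAntidiagonal.mem_antidiagonal]; omega)

lemma constantCoeff_comp : constantCoeff (PS.comp f g) = constantCoeff f := by
  rw [← PowerSeries.coeff_zero_eq_constantCoeff_apply, ← PowerSeries.coeff_zero_eq_constantCoeff_apply, coeff_comp]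
  simp

lemma coeff_one_comp : coeff 1 (PS.comp f g) = coeff 1 f * coeff 1 g := by
  rw [coeff_comp]
  rw [show (1:ℕ) + 1 = 2 from rfl, Finset.sum_range_succ, Finset.sum_range_one]
  simp [PowerSeries.coeff_one]

lemma comp_X_right : PS.comp f X = f := by
  ext k
  rw [coeff_comp]
  rw [Finset.sum_eq_single k]
  · rw [PowerSeries.coeff_X_pow, if_pos rfl, mul_one]
  · intro m _ hne
    rw [PowerSeries.coeff_X_pow, if_neg (fun h => hne h.symm), mul_zero]
  · intro hmem
    exact absurd (Finset.mem_range.mpr (by omega)) hmem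

lemma comp_X_left (hg : constantCoeff g = 0) : PS.comp X g = g := by
  ext k
  rw [coeff_comp]
  rcases Nat.eq_zero_or_pos k with hk | hk
  · subst hk
    simpa using (coeff_zero g hg).symm
  · rw [Finset.sum_eq_single 1]
    · rw [PowerSeries.coeff_X, if_pos rfl, pow_one, one_mul]
    · intro m _ hne
      rw [PowerSeries.coeff_X, if_neg hne, zero_mul]
    · intro hmem
      exact absurd (Finset.mem_range.mpr (by omega)) hmem

lemma comp_one_left : PS.comp 1 g = 1 := by
  ext k
  rw [coeff_comp]
  rw [Finset.sum_eq_single 0]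
  · simp
  · intro m _ hne
    rw [PowerSeries.coeff_one, if_neg hne, zero_mul]
  · intro hmem
    exact absurd (Finset.mem_range.mpr (by omega)) hmem

lemma comp_add_left : PS.comp (f + g) h = PS.comp f h + PS.comp g h := by
  ext k
  rw [map_add, coeff_comp, coeff_comp, coeff_comp, ← Finset.sum_add_distrib]
  apply Finset.sum_congr rfl
  intro m _
  rw [map_add, add_mul]

lemma comp_smul_left (c : ℂ) : PS.comp (c • f) h = c • PS.comp f h := by
  ext k
  rw [PowerSeries.coeff_smul, coeff_comp, coeff_comp, smul_eq_mul, Finset.mul_sum]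
  apply Finset.sum_congr rfl
  intro m _
  rw [PowerSeries.coeff_smul, smul_eq_mul, mul_assoc]

lemma comp_mul_left (hh : constantCoeff h = 0) :
    PS.comp (f * g) h = PS.comp f h * PS.comp g h := by
  ext k
  set F : ℕ × ℕ → ℂ := fun x => coeff x.1 f * coeff x.2 g * coeff k (h ^ (x.1 + x.2)) with hF
  have hsq : ∀ x : ℕ × ℕ, x ∉ range (k+1) ×ˢ range (k+1) → x.1 + x.2 ≤ 2*k → F x = 0 := by
    intro x hx hle
    have : k < x.1 + x.2 := by
      rcases Finset.mem_product.not.mp hx with h'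
      simp only [Finset.mem_range, not_and_or, not_lt] at h'
      omega
    rw [hF]
    simp only
    rw [coeff_pow_eq_zero h hh _ k this, mul_zero]
  -- LHS
  have hL : coeff k (PS.comp (f * g) h)
      = ∑ x ∈ range (k+1) ×ˢ range (k+1), F x := by
    rw [coeff_comp]
    have e1 : ∑ m ∈ range (k + 1), coeff m (f*g) * coeff k (h ^ m)
        = ∑ m ∈ range (2*k + 1), coeff m (f*g) * coeff k (h ^ m) := by
      apply Finset.sum_subset (Finset.range_subset_range.mpr (by omega))
      intro m _ hm
      rw [coeff_pow_eq_zero h hh m k (by simp at hm; omega), mul_zero]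
    rw [e1]
    have e2 : ∀ m ∈ range (2*k+1), coeff m (f*g) * coeff k (h ^ m)
        = ∑ x ∈ antidiagonal m, F x := by
      intro m _
      rw [coeff_mul, Finset.sum_mul]
      apply Finset.sum_congr rfl
      rintro ⟨i, j⟩ hij
      rw [Finset.HasAntidiagonal.mem_antidiagonal] at hij
      simp only [hF, hij]
    rw [Finset.sum_congr rfl e2, ← Finset.sum_biUnion]
    · refine (Finset.sum_subset ?_ ?_).symm
      · intro x hx
        rw [Finset.mem_biUnion]
        rw [Finset.mem_product, Finset.mem_range, Finset.mem_range] at hx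
        exact ⟨x.1 + x.2, Finset.mem_range.mpr (by omega), Finset.HasAntidiagonal.mem_antidiagonal.mpr rfl⟩
      · intro x hx hnx
        rw [Finset.mem_biUnion] at hx
        obtain ⟨m, hm, hxm⟩ := hx
        rw [Finset.HasAntidiagonal.mem_antidiagonal] at hxm
        rw [Finset.mem_range] at hm
        exact hsq x hnx (by omega)
    · intro m₁ _ m₂ _ hne
      apply Finset.disjoint_left.mpr
      intro x hx1 hx2
      rw [Finset.HasAntidiagonal.mem_antidiagonal] at hx1 hx2
      exact hne (hx1 ▸ hx2)
  -- RHS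
  have hR : coeff k (PS.comp f h * PS.comp g h)
      = ∑ x ∈ range (k+1) ×ˢ range (k+1), F x := by
    rw [coeff_mul]
    have e1 : ∀ x : ℕ × ℕ, x ∈ antidiagonal k →
        coeff x.1 (PS.comp f h) * coeff x.2 (PS.comp g h)
        = ∑ i ∈ range (k+1), ∑ j ∈ range (k+1),
            coeff i f * coeff x.1 (h^i) * (coeff j g * coeff x.2 (h^j)) := by
      rintro ⟨p, q⟩ hpq
      rw [Finset.HasAntidiagonal.mem_antidiagonal] at hpq
      rw [coeff_comp, coeff_comp]
      have ef : ∑ m ∈ range (p + 1), coeff m f * coeff p (h ^ m)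
          = ∑ m ∈ range (k + 1), coeff m f * coeff p (h ^ m) := by
        apply Finset.sum_subset (Finset.range_subset_range.mpr (by omega))
        intro m _ hm
        rw [coeff_pow_eq_zero h hh m p (by simp at hm ⊢; omega), mul_zero]
      have eg : ∑ m ∈ range (q + 1), coeff m g * coeff q (h ^ m)
          = ∑ m ∈ range (k + 1), coeff m g * coeff q (h ^ m) := by
        apply Finset.sum_subset (Finset.range_subset_range.mpr (by omega))
        intro m _ hm
        rw [coeff_pow_eq_zero h hh m q (by simp at hm ⊢; omega), mul_zero]
      rw [ef, eg, Finset.sum_mul_sum]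
    rw [Finset.sum_congr rfl e1, Finset.sum_comm]
    rw [Finset.sum_product]
    apply Finset.sum_congr rfl
    intro i _
    rw [Finset.sum_comm]
    apply Finset.sum_congr rfl
    intro j _
    have : ∑ x ∈ antidiagonal k, coeff i f * coeff x.1 (h^i) * (coeff j g * coeff x.2 (h^j))
        = coeff i f * coeff j g * ∑ x ∈ antidiagonal k, coeff x.1 (h^i) * coeff x.2 (h^j) := by
      rw [Finset.mul_sum]
      apply Finset.sum_congr rfl
      intro x _
      ring
    rw [this, ← coeff_mul, ← pow_add]
  rw [hL, hR]

lemma comp_pow_left (hh : constantCoeff h = 0) (m : ℕ) :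
    PS.comp (g ^ m) h = (PS.comp g h) ^ m := by
  induction m with
  | zero => simpa using comp_one_left h
  | succ m ih => rw [pow_succ, comp_mul_left _ _ _ hh, ih, pow_succ]

lemma comp_assoc (hg : constantCoeff g = 0) (hh : constantCoeff h = 0) :
    PS.comp (PS.comp f g) h = PS.comp f (PS.comp g h) := by
  ext k
  rw [coeff_comp, coeff_comp]
  have e1 : ∀ m ∈ range (k+1), coeff m f * coeff k (PS.comp g h ^ m)
      = ∑ i ∈ range (k+1), coeff m f * (coeff i (g ^ m) * coeff k (h ^ i)) := by
    intro m _
    rw [← comp_pow_left g h hh m, coeff_comp, Finset.mul_sum]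
  rw [Finset.sum_congr rfl e1, Finset.sum_comm]
  apply Finset.sum_congr rfl
  intro i hi
  rw [Finset.mem_range] at hi
  rw [coeff_comp, Finset.sum_mul]
  have e2 : ∑ m ∈ range (i+1), coeff m f * coeff i (g ^ m) * coeff k (h ^ i)
      = ∑ m ∈ range (k+1), coeff m f * coeff i (g ^ m) * coeff k (h ^ i) := by
    apply Finset.sum_subset (Finset.range_subset_range.mpr (by omega))
    intro m _ hm
    rw [coeff_pow_eq_zero g hg m i (by simp at hm ⊢; omega), mul_zero, zero_mul]
  rw [e2]
  apply Finset.sum_congr rfl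
  intro m _
  ring

-- agreement lemma
lemma coeff_pow_congr (k : ℕ) (hp : constantCoeff p = 0) (hq : constantCoeff q = 0)
    (hagree : ∀ i, i < k → coeff i p = coeff i q) (m : ℕ) (hm : 2 ≤ m) :
    coeff k (p ^ m) = coeff k (q ^ m) := by
  have key : coeff k (p ^ m) - coeff k (q ^ m) = 0 := by
    rw [← map_sub, ← geom_sum₂_mul p q m, coeff_mul]
    apply Finset.sum_eq_zero
    rintro ⟨u, v⟩ huv
    rw [Finset.HasAntidiagonal.mem_antidiagonal] at huv
    rcases Nat.lt_or_ge v k with hv | hv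
    · rw [map_sub, hagree v hv, sub_self, mul_zero]
    · have hu : u = 0 := by omega
      subst hu
      have : coeff 0 (∑ i ∈ range m, p ^ i * q ^ (m - 1 - i)) = 0 := by
        rw [map_sum]
        apply Finset.sum_eq_zero
        intro i _
        rw [PowerSeries.coeff_zero_eq_constantCoeff, map_mul, map_pow, map_pow, hp, hq]
        rcases Nat.eq_zero_or_pos i with hi | hi
        · subst hi
          rw [pow_zero, one_mul, zero_pow (by omega)]
        · rw [zero_pow (by omega), zero_mul]
      rw [this, zero_mul]
  exact sub_eq_zero.mp key

lemma comp_left_cancel (hg1 : coeff 1 g ≠ 0) (hp : constantCoeff p = 0)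
    (hq : constantCoeff q = 0) (hcomp : PS.comp g p = PS.comp g q) : p = q := by
  ext k
  induction k using Nat.strong_induction_on with
  | _ k ih =>
    rcases Nat.eq_zero_or_pos k with hk | hk
    · subst hk
      rw [PowerSeries.coeff_zero_eq_constantCoeff, hp, hq]
    · have hco := congrArg (coeff k) hcomp
      rw [coeff_comp, coeff_comp] at hco
      have split : ∀ r : PowerSeries ℂ, constantCoeff r = 0 →
          ∑ m ∈ range (k + 1), coeff m g * coeff k (r ^ m)
          = coeff 1 g * coeff k r + ∑ m ∈ Ico 2 (k+1), coeff m g * coeff k (r ^ m) := by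
        intro r hr
        rw [Finset.range_eq_Ico, ← Finset.sum_Ico_consecutive _ (by omega : 0 ≤ 2) (by omega : 2 ≤ k+1)]
        congr 1
        rw [show (2:ℕ) = 1 + 1 from rfl, Finset.sum_Ico_succ_top (by omega), Finset.sum_Ico_succ_top (by omega)]
        simp [PowerSeries.coeff_one, hk.ne']
      rw [split p hp, split q hq] at hco
      have hmid : ∑ m ∈ Ico 2 (k+1), coeff m g * coeff k (p ^ m)
          = ∑ m ∈ Ico 2 (k+1), coeff m g * coeff k (q ^ m) := by
        apply Finset.sum_congr rfl
        intro m hm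
        rw [Finset.mem_Ico] at hm
        rw [coeff_pow_congr p q k hp hq (fun i hi => ih i hi) m hm.1]
      rw [hmid] at hco
      have := add_right_cancel hco
      exact mul_left_cancel₀ hg1 this

lemma iter_constantCoeff (hf : constantCoeff f = 0) (m : ℕ) :
    constantCoeff (PS.iter f m) = 0 := by
  induction m with
  | zero => simp [PS.iter]
  | succ m ih => rw [PS.iter, constantCoeff_comp, hf]

lemma iter_coeff_one (m : ℕ) : coeff 1 (PS.iter f m) = (coeff 1 f) ^ m := by
  induction m with
  | zero => simp [PS.iter]
  | succ m ih => rw [PS.iter, coeff_one_comp, ih, pow_succ, mul_comm]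

lemma iter_invariant (ζ : ℂ) (hf : constantCoeff f = 0)
    (hconj : PS.comp g f = ζ • g) (m : ℕ) :
    PS.comp g (PS.iter f m) = ζ ^ m • g := by
  induction m with
  | zero => simpa [PS.iter] using comp_X_right g
  | succ m ih =>
    rw [PS.iter, ← comp_assoc g f (PS.iter f m) hf (iter_constantCoeff f hf m), hconj,
      comp_smul_left, ih, smul_smul, pow_succ, mul_comm]

lemma hasOrder_of_conj (n : ℕ) (ζ : ℂ) (hζn : ζ ^ n = 1)
    (hζm : ∀ m, 0 < m → m < n → ζ ^ m ≠ 1)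
    (hf : constantCoeff f = 0) (hg1 : coeff 1 g = 1)
    (hconj : PS.comp g f = ζ • g) :
    PS.iter f n = PowerSeries.X ∧ ∀ m, 0 < m → m < n → PS.iter f m ≠ PowerSeries.X := by
  have hg1' : coeff 1 g ≠ 0 := by rw [hg1]; exact one_ne_zero
  have hf1 : coeff 1 f = ζ := by
    have := congrArg (coeff 1) hconj
    rw [coeff_one_comp, PowerSeries.coeff_smul, hg1, one_mul, smul_eq_mul, mul_one] at this
    exact this
  constructor
  · apply comp_left_cancel g (PS.iter f n) PowerSeries.X hg1'
      (iter_constantCoeff f hf n) PowerSeries.constantCoeff_X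
    rw [iter_invariant f g ζ hf hconj n, hζn, one_smul, comp_X_right]
  · intro m hm0 hmn heq
    have h1 := iter_coeff_one f m
    rw [heq, PowerSeries.coeff_one_X, hf1] at h1
    exact hζm m hm0 hmn h1.symm

noncomputable def coefs (n : ℕ) (ζ : ℂ) (t : ℕ → ℂ) : ℕ → ℂ × ℂ
  | 0 => (0, 0)
  | 1 => (1, ζ)
  | (k+2) =>
    let K := k + 2
    let fk : PowerSeries ℂ :=
      PowerSeries.mk fun i => if h : i < K then (coefs n ζ t i).2 else 0
    let M : ℂ := ∑ j ∈ (Finset.Ico 2 K).attach,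
      (coefs n ζ t j.1).1 * PowerSeries.coeff K (fk ^ j.1)
    if K % n = 1 then (0, -M) else ((t K + M) / (ζ - ζ ^ K), t K)
  decreasing_by
  · exact h
  · exact (Finset.mem_Ico.mp j.2).2

noncomputable def fpart (n : ℕ) (ζ : ℂ) (t : ℕ → ℂ) (K : ℕ) : PowerSeries ℂ :=
  PowerSeries.mk fun i => if i < K then (coefs n ζ t i).2 else 0

noncomputable def Mval (n : ℕ) (ζ : ℂ) (t : ℕ → ℂ) (K : ℕ) : ℂ :=
  ∑ j ∈ Finset.Ico 2 K, (coefs n ζ t j).1 * PowerSeries.coeff K ((fpart n ζ t K) ^ j)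

lemma coefs_eq (n : ℕ) (ζ : ℂ) (t : ℕ → ℂ) (k : ℕ) :
    coefs n ζ t (k+2) = if (k+2) % n = 1 then (0, -(Mval n ζ t (k+2)))
      else ((t (k+2) + Mval n ζ t (k+2)) / (ζ - ζ ^ (k+2)), t (k+2)) := by
  rw [coefs]
  have hfk : (PowerSeries.mk fun i => if h : i < k+2 then (coefs n ζ t i).2 else 0)
      = fpart n ζ t (k+2) := by
    unfold fpart
    simp only [dite_eq_ite]
  simp only [hfk]
  unfold Mval
  rw [Finset.sum_attach (Finset.Ico 2 (k+2)) (fun j => (coefs n ζ t j).1 * PowerSeries.coeff (k+2) ((fpart n ζ t (k+2)) ^ j))]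

variable (n : ℕ) (ζ : ℂ) (t : ℕ → ℂ)

noncomputable def ff : PowerSeries ℂ := PowerSeries.mk fun k => (coefs n ζ t k).2
noncomputable def gg : PowerSeries ℂ := PowerSeries.mk fun k => (coefs n ζ t k).1

lemma ff_const : constantCoeff (ff n ζ t) = 0 := by
  rw [← PowerSeries.coeff_zero_eq_constantCoeff_apply]; simp [ff, coefs]

lemma gg_const : constantCoeff (gg n ζ t) = 0 := by
  rw [← PowerSeries.coeff_zero_eq_constantCoeff_apply]; simp [gg, coefs]

lemma ff_one : coeff 1 (ff n ζ t) = ζ := by simp [ff, coefs]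

lemma gg_one : coeff 1 (gg n ζ t) = 1 := by simp [gg, coefs]

lemma ff_free (k : ℕ) (hk : 2 ≤ k) (hkn : k % n ≠ 1) : coeff k (ff n ζ t) = t k := by
  obtain ⟨m, rfl⟩ : ∃ m, k = m + 2 := ⟨k - 2, by omega⟩
  simp only [ff, PowerSeries.coeff_mk, coefs_eq, if_neg hkn]

-- the middle sum in the recursion equals the true middle sum
lemma Mval_eq (K : ℕ) (hK : 2 ≤ K) :
    Mval n ζ t K = ∑ j ∈ Finset.Ico 2 K, coeff j (gg n ζ t) * coeff K ((ff n ζ t) ^ j) := by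
  unfold Mval
  apply Finset.sum_congr rfl
  intro j hj
  rw [Finset.mem_Ico] at hj
  congr 1
  · simp [gg]
  · apply coeff_pow_congr (fpart n ζ t K) (ff n ζ t) K _ (ff_const n ζ t) _ j hj.1
    · rw [← PowerSeries.coeff_zero_eq_constantCoeff_apply]
      simp [fpart, coefs, hK]
    · intro i hi
      simp [fpart, ff, if_pos hi]

lemma conj_eq (hζ : ∀ k : ℕ, 2 ≤ k → (if k % n = 1 then ζ ^ k = ζ else ζ ^ k ≠ ζ)) :
    PS.comp (gg n ζ t) (ff n ζ t) = ζ • (gg n ζ t) := by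
  ext K
  rw [coeff_comp, PowerSeries.coeff_smul, smul_eq_mul]
  match K, (by omega : K = 0 ∨ K = 1 ∨ 2 ≤ K) with
  | 0, _ => simp [gg, coefs]
  | 1, _ =>
    rw [show (1:ℕ)+1 = 2 from rfl, Finset.sum_range_succ, Finset.sum_range_one]
    simp [gg, ff, coefs, PowerSeries.coeff_one]
  | K, Or.inr (Or.inr hK) =>
    -- split the sum
    have hsplit : ∑ m ∈ range (K + 1), coeff m (gg n ζ t) * coeff K ((ff n ζ t) ^ m)
        = coeff K (ff n ζ t) + Mval n ζ t K
          + coeff K (gg n ζ t) * ζ ^ K := by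
      rw [Finset.sum_range_succ, Finset.range_eq_Ico,
        ← Finset.sum_Ico_consecutive _ (by omega : 0 ≤ 2) (by omega : 2 ≤ K)]
      rw [show Finset.Ico 0 2 = {0, 1} from rfl]
      rw [Finset.sum_insert (by simp), Finset.sum_singleton]
      rw [coeff_pow_self _ (ff_const n ζ t) K, ff_one, Mval_eq n ζ t K hK]
      have h0 : coeff 0 (gg n ζ t) = 0 := by simp [gg, coefs]
      have h1 : coeff 1 (gg n ζ t) = 1 := gg_one n ζ t
      rw [h0, h1, pow_one, zero_mul, one_mul]
      ring
    rw [hsplit]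
    obtain ⟨m, rfl⟩ : ∃ m, K = m + 2 := ⟨K - 2, by omega⟩
    have hcf : coeff (m+2) (ff n ζ t) = (coefs n ζ t (m+2)).2 := by simp [ff]
    have hcg : coeff (m+2) (gg n ζ t) = (coefs n ζ t (m+2)).1 := by simp [gg]
    by_cases hmod : (m+2) % n = 1
    · have hz : ζ ^ (m+2) = ζ := by have := hζ (m+2) (by omega); rwa [if_pos hmod] at this
      rw [hcf, hcg, coefs_eq, if_pos hmod]
      simp [hz]
    · have hz : ζ ^ (m+2) ≠ ζ := by have := hζ (m+2) (by omega); rwa [if_neg hmod] at this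
      have hzz : ζ - ζ ^ (m+2) ≠ 0 := fun h => hz (by linear_combination -h)
      rw [hcf, hcg, coefs_eq, if_neg hmod]
      simp only
      field_simp
      ring

-- ζ facts
lemma zeta_facts (n : ℕ) (hn : 2 ≤ n) :
    ∃ ζ : ℂ, ζ ^ n = 1 ∧ (∀ m, 0 < m → m < n → ζ ^ m ≠ 1) ∧
      (∀ k : ℕ, 2 ≤ k → (if k % n = 1 then ζ ^ k = ζ else ζ ^ k ≠ ζ)) := by
  have hprim := Complex.isPrimitiveRoot_exp n (by omega)
  set ζ := Complex.exp (2 * Real.pi * Complex.I / n) with hζ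
  have hzne : ζ ≠ 0 := Complex.exp_ne_zero _
  refine ⟨ζ, hprim.pow_eq_one, fun m hm0 hmn => hprim.pow_ne_one_of_pos_of_lt hm0.ne' hmn, ?_⟩
  intro k hk
  have key : ζ ^ k = ζ ↔ k % n = 1 := by
    have h1 : ζ ^ k = ζ ↔ ζ ^ (k - 1) = 1 := by
      constructor
      · intro h
        have : ζ ^ (k - 1) * ζ = 1 * ζ := by
          rw [one_mul, ← pow_succ, show k - 1 + 1 = k by omega, h]
        exact mul_right_cancel₀ hzne this
      · intro h
        calc ζ ^ k = ζ ^ (k - 1) * ζ := by rw [← pow_succ, show k - 1 + 1 = k by omega]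
        _ = ζ := by rw [h, one_mul]
    rw [h1, hprim.pow_eq_one_iff_dvd]
    constructor
    · rintro ⟨q, hq⟩
      have hkq : k = n * q + 1 := by omega
      rw [hkq, Nat.mul_add_mod, Nat.mod_eq_of_lt (by omega)]
    · intro h
      refine ⟨k / n, ?_⟩
      have := Nat.div_add_mod k n
      omega
  by_cases h : k % n = 1
  · rw [if_pos h]; exact key.mpr h
  · rw [if_neg h]; exact fun hc => h (key.mp hc)

-- divergence
lemma divergence (n : ℕ) (hn : 2 ≤ n) (f : PowerSeries ℂ)
    (hcoeff : ∀ m : ℕ, 2 ≤ m → coeff (n*m) f = ((n*m : ℕ) : ℂ) ^ (n*m))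
    (z : ℂ) (hz : z ≠ 0) :
    ¬ ∃ l : ℂ, Filter.Tendsto
        (fun N => ∑ k ∈ Finset.range N, PowerSeries.coeff k f * z ^ k)
        Filter.atTop (nhds l) := by
  rintro ⟨l, hl⟩
  set S : ℕ → ℂ := fun N => ∑ k ∈ Finset.range N, coeff k f * z ^ k with hS
  have h1 : Filter.Tendsto (fun k => S (k+1)) Filter.atTop (nhds l) :=
    hl.comp (Filter.tendsto_add_atTop_nat 1)
  have hterm : Filter.Tendsto (fun k => coeff k f * z ^ k) Filter.atTop (nhds 0) := by
    have := h1.sub hl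
    simp only [sub_self] at this
    convert this using 2 with k
    rw [hS]
    simp [Finset.sum_range_succ]
  have hev : ∀ᶠ k in Filter.atTop, ‖coeff k f * z ^ k‖ < 1 := by
    have hn0 : Filter.Tendsto (fun k => ‖coeff k f * z ^ k‖) Filter.atTop (nhds 0) := by
      simpa using hterm.norm
    exact hn0.eventually_lt_const (by norm_num)
  obtain ⟨K, hK⟩ := Filter.eventually_atTop.mp hev
  set m := K + Nat.ceil (‖z‖⁻¹) + 2 with hm
  set k := n * m with hk
  have hkK : k ≥ K := by
    have : m ≤ n * m := Nat.le_mul_of_pos_left m (by omega)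
    omega
  have hlt := hK k hkK
  have hnorm : ‖coeff k f * z ^ k‖ = ((k : ℝ) * ‖z‖) ^ k := by
    rw [hcoeff m (by omega), norm_mul, norm_pow, norm_pow, Complex.norm_natCast, ← mul_pow]
  have hkz : 1 ≤ (k : ℝ) * ‖z‖ := by
    have hz0 : 0 < ‖z‖ := norm_pos_iff.mpr hz
    have h2 : (Nat.ceil (‖z‖⁻¹) : ℝ) ≤ (k : ℝ) := by
      have : Nat.ceil (‖z‖⁻¹) ≤ k := by
        have : m ≤ n * m := Nat.le_mul_of_pos_left m (by omega)
        omega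
      exact_mod_cast this
    have h3 : ‖z‖⁻¹ ≤ (k : ℝ) := le_trans (Nat.le_ceil _) h2
    calc (1:ℝ) = ‖z‖⁻¹ * ‖z‖ := by rw [inv_mul_cancel₀ hz0.ne']
    _ ≤ (k : ℝ) * ‖z‖ := by gcongr
  rw [hnorm] at hlt
  have : (1:ℝ) ≤ ((k : ℝ) * ‖z‖) ^ k := one_le_pow₀ hkz
  linarith

noncomputable def tfun (c : ℝ) : ℕ → ℂ := fun k => if k = 2 then (c : ℂ) else ((k : ℕ) : ℂ) ^ k

end PSAux

theorem stmt_14 (n : ℕ) (hn : 2 ≤ n) :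
    ∃ S : Set (PowerSeries ℂ), ¬ S.Countable ∧
      ∀ f ∈ S, PS.HasOrder f n ∧
        ∀ z : ℂ, z ≠ 0 →
          ¬ ∃ l : ℂ, Filter.Tendsto
              (fun N => ∑ k ∈ Finset.range N, PowerSeries.coeff k f * z ^ k)
              Filter.atTop (nhds l) := by
  classical
  obtain ⟨ζ, hζn, hζm, hζif⟩ := PSAux.zeta_facts n hn
  set F : ℝ → PowerSeries ℂ := fun c => PSAux.ff n ζ (PSAux.tfun c) with hF
  have h2n1 : 2 % n ≠ 1 := by
    rcases eq_or_lt_of_le hn with h | h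
    · rw [← h]; omega
    · rw [Nat.mod_eq_of_lt h]; omega
  have hcoeff2 : ∀ c : ℝ, PowerSeries.coeff 2 (F c) = (c : ℂ) := by
    intro c
    rw [hF]
    rw [PSAux.ff_free n ζ (PSAux.tfun c) 2 le_rfl h2n1]
    simp [PSAux.tfun]
  have hinj : Function.Injective F := by
    intro a b hab
    have := congrArg (PowerSeries.coeff 2) hab
    rw [hcoeff2, hcoeff2] at this
    exact_mod_cast this
  refine ⟨Set.range F, ?_, ?_⟩
  · intro hc
    have h1 := hc.preimage hinj
    rw [Set.preimage_range] at h1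
    exact Cardinal.not_countable_real h1
  · rintro f ⟨c, rfl⟩
    constructor
    · exact PSAux.hasOrder_of_conj (PSAux.ff n ζ (PSAux.tfun c)) (PSAux.gg n ζ (PSAux.tfun c))
        n ζ hζn hζm (PSAux.ff_const n ζ (PSAux.tfun c)) (PSAux.gg_one n ζ (PSAux.tfun c))
        (PSAux.conj_eq n ζ (PSAux.tfun c) hζif)
    · intro z hz
      apply PSAux.divergence n hn _ _ z hz
      intro m hm
      have hk2 : 2 ≤ n * m := by nlinarith
      have hmod : (n * m) % n ≠ 1 := by
        rw [Nat.mul_mod_right]; omega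
      rw [hF]
      rw [PSAux.ff_free n ζ (PSAux.tfun c) (n*m) hk2 hmod]
      have hne2 : n * m ≠ 2 := by nlinarith
      simp [PSAux.tfun, hne2]
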